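/- Let Ω ⊆ ℝ² be open and let r, r* : Ω → ℝ³ be C³ immersions whose first fundamental forms coincide on Ω, i.e. E = E*, F = F*, G = G* pointwise (so that the map r(p) ↦ r*(p) is an isometric deformation). Then the Gaussian curvatures coincide: K = K* at every point of Ω. -/

import Mathlib

noncomputable section

/-- Euclidean dot product on `ℝ³`. -/
def dot3 (x y : Fin 3 → ℝ) : ℝ := x 0 * y 0 + x 1 * y 1 + x 2 * y 2

/-- Cross product on `ℝ³`. -/
def cross3 (x y : Fin 3 → ℝ) : Fin 3 → ℝ :=
  ![x 1 * y 2 - x 2 * y 1, x 2 * y 0 - x 0 * y 2, x 0 * y 1 - x 1 * y 0]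

/-- Euclidean length on `ℝ³`. -/
def len3 (x : Fin 3 → ℝ) : ℝ := Real.sqrt (dot3 x x)

/-- Partial derivative in the first variable. -/
def du {E : Type*} [NormedAddCommGroup E] [NormedSpace ℝ E]
    (f : ℝ × ℝ → E) (p : ℝ × ℝ) : E := fderiv ℝ f p (1, 0)

/-- Partial derivative in the second variable. -/
def dv {E : Type*} [NormedAddCommGroup E] [NormedSpace ℝ E]
    (f : ℝ × ℝ → E) (p : ℝ × ℝ) : E := fderiv ℝ f p (0, 1)

/-- First fundamental form coefficient `E = r_u · r_u`. -/
def Icoef₁ (r : ℝ × ℝ → Fin 3 → ℝ) (p : ℝ × ℝ) : ℝ := dot3 (du r p) (du r p)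

/-- First fundamental form coefficient `F = r_u · r_v`. -/
def Icoef₂ (r : ℝ × ℝ → Fin 3 → ℝ) (p : ℝ × ℝ) : ℝ := dot3 (du r p) (dv r p)

/-- First fundamental form coefficient `G = r_v · r_v`. -/
def Icoef₃ (r : ℝ × ℝ → Fin 3 → ℝ) (p : ℝ × ℝ) : ℝ := dot3 (dv r p) (dv r p)

/-- Unit normal `n = (r_u × r_v)/|r_u × r_v|`. -/
def unitNormal (r : ℝ × ℝ → Fin 3 → ℝ) (p : ℝ × ℝ) : Fin 3 → ℝ :=
  (len3 (cross3 (du r p) (dv r p)))⁻¹ • cross3 (du r p) (dv r p)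

/-- Second fundamental form coefficient `L = r_uu · n`. -/
def IIcoef₁ (r : ℝ × ℝ → Fin 3 → ℝ) (p : ℝ × ℝ) : ℝ := dot3 (du (du r) p) (unitNormal r p)

/-- Second fundamental form coefficient `M = r_uv · n`. -/
def IIcoef₂ (r : ℝ × ℝ → Fin 3 → ℝ) (p : ℝ × ℝ) : ℝ := dot3 (dv (du r) p) (unitNormal r p)

/-- Second fundamental form coefficient `N = r_vv · n`. -/
def IIcoef₃ (r : ℝ × ℝ → Fin 3 → ℝ) (p : ℝ × ℝ) : ℝ := dot3 (dv (dv r) p) (unitNormal r p)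

/-- Gaussian curvature `K = (LN − M²)/(EG − F²)`. -/
def gaussK (r : ℝ × ℝ → Fin 3 → ℝ) (p : ℝ × ℝ) : ℝ :=
  (IIcoef₁ r p * IIcoef₃ r p - IIcoef₂ r p ^ 2) /
    (Icoef₁ r p * Icoef₃ r p - Icoef₂ r p ^ 2)

/-- Mean curvature `H = (EN − 2FM + GL)/(2(EG − F²))`. -/
def meanH (r : ℝ × ℝ → Fin 3 → ℝ) (p : ℝ × ℝ) : ℝ :=
  (Icoef₁ r p * IIcoef₃ r p - 2 * Icoef₂ r p * IIcoef₂ r p + Icoef₃ r p * IIcoef₁ r p) /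
    (2 * (Icoef₁ r p * Icoef₃ r p - Icoef₂ r p ^ 2))

/-! ### Auxiliary lemmas for the proof -/

section Aux

lemma dot3_comm (x y : Fin 3 → ℝ) : dot3 x y = dot3 y x := by unfold dot3; ring

lemma dot3_nonneg (x : Fin 3 → ℝ) : 0 ≤ dot3 x x := by
  unfold dot3; nlinarith [sq_nonneg (x 0), sq_nonneg (x 1), sq_nonneg (x 2)]

lemma dot3_pos_of_ne (x : Fin 3 → ℝ) (hx : x ≠ 0) : 0 < dot3 x x := by
  rcases (dot3_nonneg x).lt_or_eq with h | h
  · exact h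
  · exfalso; apply hx; funext i
    have h0 : x 0 ^ 2 + x 1 ^ 2 + x 2 ^ 2 = 0 := by unfold dot3 at h; nlinarith
    have := sq_nonneg (x 0); have := sq_nonneg (x 1); have := sq_nonneg (x 2)
    fin_cases i <;> simp <;> nlinarith

lemma dot3_smul_right (c : ℝ) (x y : Fin 3 → ℝ) : dot3 x (c • y) = c * dot3 x y := by
  simp [dot3, Pi.smul_apply, smul_eq_mul]; ring

lemma lagrange (a b : Fin 3 → ℝ) :
    dot3 (cross3 a b) (cross3 a b) = dot3 a a * dot3 b b - dot3 a b ^ 2 := by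
  simp [dot3, cross3]; ring

lemma gram (a b c d : Fin 3 → ℝ) :
    dot3 a (cross3 c d) * dot3 b (cross3 c d) =
      dot3 a b * (dot3 c c * dot3 d d - dot3 c d ^ 2)
      - dot3 a c * (dot3 b c * dot3 d d - dot3 b d * dot3 c d)
      + dot3 a d * (dot3 b c * dot3 c d - dot3 b d * dot3 c c) := by
  simp [dot3, cross3]; ring

lemma hasFDerivAt_dot3 {f g : ℝ × ℝ → Fin 3 → ℝ} {q : ℝ × ℝ}
    (hf : DifferentiableAt ℝ f q) (hg : DifferentiableAt ℝ g q) :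
    ∃ L : ℝ × ℝ →L[ℝ] ℝ, HasFDerivAt (fun x => dot3 (f x) (g x)) L q ∧
      ∀ y, L y = dot3 (fderiv ℝ f q y) (g q) + dot3 (f q) (fderiv ℝ g q y) := by
  have Hf := hf.hasFDerivAt
  have Hg := hg.hasFDerivAt
  have hfc : ∀ i : Fin 3, HasFDerivAt (fun x => f x i)
      ((ContinuousLinearMap.proj i).comp (fderiv ℝ f q)) q := fun i =>
    (ContinuousLinearMap.proj (R := ℝ) (φ := fun _ : Fin 3 => ℝ) i).hasFDerivAt.comp q Hf
  have hgc : ∀ i : Fin 3, HasFDerivAt (fun x => g x i)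
      ((ContinuousLinearMap.proj i).comp (fderiv ℝ g q)) q := fun i =>
    (ContinuousLinearMap.proj (R := ℝ) (φ := fun _ : Fin 3 => ℝ) i).hasFDerivAt.comp q Hg
  have H := (((hfc 0).mul (hgc 0)).add ((hfc 1).mul (hgc 1))).add ((hfc 2).mul (hgc 2))
  refine ⟨_, H, ?_⟩
  · intro y
    simp [dot3, ContinuousLinearMap.add_apply, ContinuousLinearMap.smul_apply,
      ContinuousLinearMap.comp_apply, ContinuousLinearMap.proj_apply, smul_eq_mul]
    ring

lemma differentiableAt_dot3 {f g : ℝ × ℝ → Fin 3 → ℝ} {q : ℝ × ℝ}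
    (hf : DifferentiableAt ℝ f q) (hg : DifferentiableAt ℝ g q) :
    DifferentiableAt ℝ (fun x => dot3 (f x) (g x)) q :=
  (hasFDerivAt_dot3 hf hg).choose_spec.1.differentiableAt

lemma fderiv_dot3_apply {f g : ℝ × ℝ → Fin 3 → ℝ} {q : ℝ × ℝ}
    (hf : DifferentiableAt ℝ f q) (hg : DifferentiableAt ℝ g q) (y : ℝ × ℝ) :
    fderiv ℝ (fun x => dot3 (f x) (g x)) q y
      = dot3 (fderiv ℝ f q y) (g q) + dot3 (f q) (fderiv ℝ g q y) := by
  obtain ⟨L, hL, hLy⟩ := hasFDerivAt_dot3 hf hg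
  rw [hL.fderiv]; exact hLy y

lemma du_dot3 {f g : ℝ × ℝ → Fin 3 → ℝ} {q : ℝ × ℝ}
    (hf : DifferentiableAt ℝ f q) (hg : DifferentiableAt ℝ g q) :
    du (fun x => dot3 (f x) (g x)) q = dot3 (du f q) (g q) + dot3 (du g q) (f q) := by
  have h := fderiv_dot3_apply hf hg (1, 0)
  rw [dot3_comm (f q)] at h
  exact h

lemma dv_dot3 {f g : ℝ × ℝ → Fin 3 → ℝ} {q : ℝ × ℝ}
    (hf : DifferentiableAt ℝ f q) (hg : DifferentiableAt ℝ g q) :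
    dv (fun x => dot3 (f x) (g x)) q = dot3 (dv f q) (g q) + dot3 (dv g q) (f q) := by
  have h := fderiv_dot3_apply hf hg (0, 1)
  rw [dot3_comm (f q)] at h
  exact h

lemma du_add {f g : ℝ × ℝ → ℝ} {p : ℝ × ℝ}
    (hf : DifferentiableAt ℝ f p) (hg : DifferentiableAt ℝ g p) :
    du (fun q => f q + g q) p = du f p + du g p := by
  show fderiv ℝ (fun q => f q + g q) p (1, 0) = fderiv ℝ f p (1, 0) + fderiv ℝ g p (1, 0)
  rw [fderiv_fun_add hf hg]; rfl

lemma dv_add {f g : ℝ × ℝ → ℝ} {p : ℝ × ℝ}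
    (hf : DifferentiableAt ℝ f p) (hg : DifferentiableAt ℝ g p) :
    dv (fun q => f q + g q) p = dv f p + dv g p := by
  show fderiv ℝ (fun q => f q + g q) p (0, 1) = fderiv ℝ f p (0, 1) + fderiv ℝ g p (0, 1)
  rw [fderiv_fun_add hf hg]; rfl

lemma du_congr_fun {F : Type*} [NormedAddCommGroup F] [NormedSpace ℝ F]
    {f g : ℝ × ℝ → F} {p : ℝ × ℝ} (h : f =ᶠ[nhds p] g) : du f p = du g p := by
  show fderiv ℝ f p (1, 0) = fderiv ℝ g p (1, 0)
  rw [h.fderiv_eq]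

lemma dv_congr_fun {F : Type*} [NormedAddCommGroup F] [NormedSpace ℝ F]
    {f g : ℝ × ℝ → F} {p : ℝ × ℝ} (h : f =ᶠ[nhds p] g) : dv f p = dv g p := by
  show fderiv ℝ f p (0, 1) = fderiv ℝ g p (0, 1)
  rw [h.fderiv_eq]

lemma fderiv_eval {F : Type*} [NormedAddCommGroup F] [NormedSpace ℝ F]
    {f : ℝ × ℝ → F} {p : ℝ × ℝ} (hf : DifferentiableAt ℝ (fderiv ℝ f) p) (y z : ℝ × ℝ) :
    fderiv ℝ (fun q => fderiv ℝ f q y) p z = fderiv ℝ (fderiv ℝ f) p z y := by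
  have H := (ContinuousLinearMap.apply ℝ F y).hasFDerivAt.comp p hf.hasFDerivAt
  rw [show (fun q : ℝ × ℝ => fderiv ℝ f q y)
      = (⇑(ContinuousLinearMap.apply ℝ F y) ∘ fderiv ℝ f) from rfl, H.fderiv]
  rfl

lemma clairaut {F : Type*} [NormedAddCommGroup F] [NormedSpace ℝ F]
    {f : ℝ × ℝ → F} {p : ℝ × ℝ}
    (h1 : ∀ᶠ q in nhds p, DifferentiableAt ℝ f q)
    (h2 : DifferentiableAt ℝ (fderiv ℝ f) p) :
    dv (du f) p = du (dv f) p := by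
  have hs := second_derivative_symmetric_of_eventually (𝕜 := ℝ)
    (f := f) (f' := fderiv ℝ f) (f'' := fderiv ℝ (fderiv ℝ f) p)
    (by filter_upwards [h1] with y hy using hy.hasFDerivAt) h2.hasFDerivAt
  show fderiv ℝ (fun q => fderiv ℝ f q (1, 0)) p (0, 1)
      = fderiv ℝ (fun q => fderiv ℝ f q (0, 1)) p (1, 0)
  rw [fderiv_eval h2, fderiv_eval h2, hs]

/-- Brioschi's intrinsic formula for the Gaussian curvature. -/
def brioschi (Ef Ff Gf : ℝ × ℝ → ℝ) (p : ℝ × ℝ) : ℝ :=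
  ((dv (du Ff) p - dv (dv Ef) p / 2 - du (du Gf) p / 2) * (Ef p * Gf p - Ff p ^ 2)
    - (du Ef p / 2) * ((dv Ff p - du Gf p / 2) * Gf p - (dv Gf p / 2) * Ff p)
    + (du Ff p - dv Ef p / 2) * ((dv Ff p - du Gf p / 2) * Ff p - (dv Gf p / 2) * Ef p)
    + (dv Ef p / 2) ^ 2 * Gf p - 2 * (dv Ef p / 2) * (du Gf p / 2) * Ff p
    + (du Gf p / 2) ^ 2 * Ef p)
  / (Ef p * Gf p - Ff p ^ 2) ^ 2

theorem gauss_brioschi (Ω : Set (ℝ × ℝ)) (hΩ : IsOpen Ω) (r : ℝ × ℝ → Fin 3 → ℝ)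
    (hr : ContDiffOn ℝ 3 r Ω) {p : ℝ × ℝ} (hp : p ∈ Ω)
    (himm : cross3 (du r p) (dv r p) ≠ 0) :
    gaussK r p = brioschi (Icoef₁ r) (Icoef₂ r) (Icoef₃ r) p := by
  have hΩp : Ω ∈ nhds p := hΩ.mem_nhds hp
  have hr1 : ContDiffOn ℝ 2 (fderiv ℝ r) Ω := hr.fderiv_of_isOpen hΩ (by norm_num)
  have ha : ContDiffOn ℝ 2 (du r) Ω := hr1.clm_apply contDiffOn_const
  have hb : ContDiffOn ℝ 2 (dv r) Ω := hr1.clm_apply contDiffOn_const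
  have ha1 : ContDiffOn ℝ 1 (fderiv ℝ (du r)) Ω := ha.fderiv_of_isOpen hΩ (by norm_num)
  have hb1 : ContDiffOn ℝ 1 (fderiv ℝ (dv r)) Ω := hb.fderiv_of_isOpen hΩ (by norm_num)
  have dR : ∀ q ∈ Ω, DifferentiableAt ℝ r q := fun q hq =>
    (hr.contDiffAt (hΩ.mem_nhds hq)).differentiableAt (by norm_num)
  have dA : ∀ q ∈ Ω, DifferentiableAt ℝ (du r) q := fun q hq =>
    (ha.contDiffAt (hΩ.mem_nhds hq)).differentiableAt (by norm_num)
  have dB : ∀ q ∈ Ω, DifferentiableAt ℝ (dv r) q := fun q hq =>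
    (hb.contDiffAt (hΩ.mem_nhds hq)).differentiableAt (by norm_num)
  have dFr : ∀ q ∈ Ω, DifferentiableAt ℝ (fderiv ℝ r) q := fun q hq =>
    (hr1.contDiffAt (hΩ.mem_nhds hq)).differentiableAt (by norm_num)
  have dFa : DifferentiableAt ℝ (fderiv ℝ (du r)) p :=
    (ha1.contDiffAt hΩp).differentiableAt (by norm_num)
  have dFb : DifferentiableAt ℝ (fderiv ℝ (dv r)) p :=
    (hb1.contDiffAt hΩp).differentiableAt (by norm_num)
  have dAu : DifferentiableAt ℝ (du (du r)) p :=
    (ContinuousLinearMap.apply ℝ (Fin 3 → ℝ) (((1 : ℝ), (0 : ℝ)))).differentiableAt.comp p dFa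
  have dAv : DifferentiableAt ℝ (dv (du r)) p :=
    (ContinuousLinearMap.apply ℝ (Fin 3 → ℝ) (((0 : ℝ), (1 : ℝ)))).differentiableAt.comp p dFa
  have dBu : DifferentiableAt ℝ (du (dv r)) p :=
    (ContinuousLinearMap.apply ℝ (Fin 3 → ℝ) (((1 : ℝ), (0 : ℝ)))).differentiableAt.comp p dFb
  have dBv : DifferentiableAt ℝ (dv (dv r)) p :=
    (ContinuousLinearMap.apply ℝ (Fin 3 → ℝ) (((0 : ℝ), (1 : ℝ)))).differentiableAt.comp p dFb
  have hsym : ∀ q ∈ Ω, dv (du r) q = du (dv r) q := fun q hq =>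
    clairaut (by filter_upwards [hΩ.mem_nhds hq] with y hy using dR y hy) (dFr q hq)
  have hba : du (dv r) p = dv (du r) p := (hsym p hp).symm
  have heq : dv (du r) =ᶠ[nhds p] du (dv r) :=
    Filter.eventuallyEq_of_mem hΩp (fun q hq => hsym q hq)
  have hsym2 : dv (du (du r)) p = du (dv (du r)) p :=
    clairaut (by filter_upwards [hΩp] with y hy using dA y hy) dFa
  have hw32 : dv (du (du r)) p = du (du (dv r)) p := by
    rw [hsym2]; exact du_congr_fun heq
  have hw14 : dv (du (dv r)) p = dv (dv (du r)) p := (dv_congr_fun heq).symm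
  -- first derivatives of the fundamental coefficients
  have hEu : ∀ q ∈ Ω, du (Icoef₁ r) q
      = dot3 (du (du r) q) (du r q) + dot3 (du (du r) q) (du r q) :=
    fun q hq => du_dot3 (dA q hq) (dA q hq)
  have hEv : ∀ q ∈ Ω, dv (Icoef₁ r) q
      = dot3 (dv (du r) q) (du r q) + dot3 (dv (du r) q) (du r q) :=
    fun q hq => dv_dot3 (dA q hq) (dA q hq)
  have hFu : ∀ q ∈ Ω, du (Icoef₂ r) q
      = dot3 (du (du r) q) (dv r q) + dot3 (du (dv r) q) (du r q) :=
    fun q hq => du_dot3 (dA q hq) (dB q hq)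
  have hFv : ∀ q ∈ Ω, dv (Icoef₂ r) q
      = dot3 (dv (du r) q) (dv r q) + dot3 (dv (dv r) q) (du r q) :=
    fun q hq => dv_dot3 (dA q hq) (dB q hq)
  have hGu : ∀ q ∈ Ω, du (Icoef₃ r) q
      = dot3 (du (dv r) q) (dv r q) + dot3 (du (dv r) q) (dv r q) :=
    fun q hq => du_dot3 (dB q hq) (dB q hq)
  have hGv : ∀ q ∈ Ω, dv (Icoef₃ r) q
      = dot3 (dv (dv r) q) (dv r q) + dot3 (dv (dv r) q) (dv r q) :=
    fun q hq => dv_dot3 (dB q hq) (dB q hq)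
  have hFu' : du (Icoef₂ r) p
      = dot3 (du (du r) p) (dv r p) + dot3 (dv (du r) p) (du r p) := by
    rw [hFu p hp, hba]
  have hGu' : du (Icoef₃ r) p
      = dot3 (dv (du r) p) (dv r p) + dot3 (dv (du r) p) (dv r p) := by
    rw [hGu p hp, hba]
  -- second derivatives
  have hEvv : dv (dv (Icoef₁ r)) p
      = dot3 (dv (dv (du r)) p) (du r p) + dot3 (dv (du r) p) (dv (du r) p)
        + (dot3 (dv (dv (du r)) p) (du r p) + dot3 (dv (du r) p) (dv (du r) p)) := by
    rw [dv_congr_fun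
        (g := fun q => dot3 (dv (du r) q) (du r q) + dot3 (dv (du r) q) (du r q))
        (Filter.eventuallyEq_of_mem hΩp (fun q hq => hEv q hq)),
      dv_add (differentiableAt_dot3 dAv (dA p hp)) (differentiableAt_dot3 dAv (dA p hp)),
      dv_dot3 dAv (dA p hp)]
  have hGuu : du (du (Icoef₃ r)) p
      = dot3 (du (du (dv r)) p) (dv r p) + dot3 (dv (du r) p) (dv (du r) p)
        + (dot3 (du (du (dv r)) p) (dv r p) + dot3 (dv (du r) p) (dv (du r) p)) := by
    rw [du_congr_fun
        (g := fun q => dot3 (du (dv r) q) (dv r q) + dot3 (du (dv r) q) (dv r q))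
        (Filter.eventuallyEq_of_mem hΩp (fun q hq => hGu q hq)),
      du_add (differentiableAt_dot3 dBu (dB p hp)) (differentiableAt_dot3 dBu (dB p hp)),
      du_dot3 dBu (dB p hp), hba]
  have hFuv : dv (du (Icoef₂ r)) p
      = dot3 (du (du (dv r)) p) (dv r p) + dot3 (du (du r) p) (dv (dv r) p)
        + (dot3 (dv (dv (du r)) p) (du r p) + dot3 (dv (du r) p) (dv (du r) p)) := by
    rw [dv_congr_fun
        (g := fun q => dot3 (du (du r) q) (dv r q) + dot3 (du (dv r) q) (du r q))
        (Filter.eventuallyEq_of_mem hΩp (fun q hq => hFu q hq)),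
      dv_add (differentiableAt_dot3 dAu (dB p hp)) (differentiableAt_dot3 dBu (dA p hp)),
      dv_dot3 dAu (dB p hp), dv_dot3 dBu (dA p hp), hw32, hw14, hba,
      dot3_comm (dv (dv r) p) (du (du r) p)]
  -- length of the normal
  have hwpos : 0 < len3 (cross3 (du r p) (dv r p)) :=
    Real.sqrt_pos.2 (dot3_pos_of_ne _ himm)
  have hwne : len3 (cross3 (du r p) (dv r p)) ≠ 0 := ne_of_gt hwpos
  have hw2 : len3 (cross3 (du r p) (dv r p)) ^ 2
      = dot3 (du r p) (du r p) * dot3 (dv r p) (dv r p) - dot3 (du r p) (dv r p) ^ 2 := by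
    rw [show len3 (cross3 (du r p) (dv r p))
        = Real.sqrt (dot3 (cross3 (du r p) (dv r p)) (cross3 (du r p) (dv r p))) from rfl,
      Real.sq_sqrt (dot3_nonneg _), lagrange]
  have hL : IIcoef₁ r p = (len3 (cross3 (du r p) (dv r p)))⁻¹
      * dot3 (du (du r) p) (cross3 (du r p) (dv r p)) := dot3_smul_right _ _ _
  have hM : IIcoef₂ r p = (len3 (cross3 (du r p) (dv r p)))⁻¹
      * dot3 (dv (du r) p) (cross3 (du r p) (dv r p)) := dot3_smul_right _ _ _
  have hN : IIcoef₃ r p = (len3 (cross3 (du r p) (dv r p)))⁻¹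
      * dot3 (dv (dv r) p) (cross3 (du r p) (dv r p)) := dot3_smul_right _ _ _
  have hnum : IIcoef₁ r p * IIcoef₃ r p - IIcoef₂ r p ^ 2 =
      ((dot3 (du (du r) p) (dv (dv r) p)
          * (dot3 (du r p) (du r p) * dot3 (dv r p) (dv r p) - dot3 (du r p) (dv r p) ^ 2)
        - dot3 (du (du r) p) (du r p)
          * (dot3 (dv (dv r) p) (du r p) * dot3 (dv r p) (dv r p)
            - dot3 (dv (dv r) p) (dv r p) * dot3 (du r p) (dv r p))
        + dot3 (du (du r) p) (dv r p)
          * (dot3 (dv (dv r) p) (du r p) * dot3 (du r p) (dv r p)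
            - dot3 (dv (dv r) p) (dv r p) * dot3 (du r p) (du r p)))
      - (dot3 (dv (du r) p) (dv (du r) p)
          * (dot3 (du r p) (du r p) * dot3 (dv r p) (dv r p) - dot3 (du r p) (dv r p) ^ 2)
        - dot3 (dv (du r) p) (du r p)
          * (dot3 (dv (du r) p) (du r p) * dot3 (dv r p) (dv r p)
            - dot3 (dv (du r) p) (dv r p) * dot3 (du r p) (dv r p))
        + dot3 (dv (du r) p) (dv r p)
          * (dot3 (dv (du r) p) (du r p) * dot3 (du r p) (dv r p)
            - dot3 (dv (du r) p) (dv r p) * dot3 (du r p) (du r p))))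
      / len3 (cross3 (du r p) (dv r p)) ^ 2 := by
    rw [hL, hM, hN, ← gram (du (du r) p) (dv (dv r) p) (du r p) (dv r p),
      ← gram (dv (du r) p) (dv (du r) p) (du r p) (dv r p)]
    field_simp
  unfold gaussK brioschi
  rw [hnum, hFuv, hEvv, hGuu, hEu p hp, hEv p hp, hFu', hFv p hp, hGu', hGv p hp]
  simp only [Icoef₁, Icoef₂, Icoef₃]
  rw [← hw2]
  field_simp
  ring

end Aux

/-- **Theorema egregium** (second claim of Proposition 6.1): if two `C³` immersions
over the same domain have identical first fundamental forms (i.e. the map between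
them is an isometric deformation), then their Gaussian curvatures coincide. -/
theorem theorema_egregium
    (Ω : Set (ℝ × ℝ)) (hΩ : IsOpen Ω)
    (r rstar : ℝ × ℝ → Fin 3 → ℝ)
    (hr : ContDiffOn ℝ 3 r Ω) (hrstar : ContDiffOn ℝ 3 rstar Ω)
    (himm : ∀ p ∈ Ω, cross3 (du r p) (dv r p) ≠ 0)
    (himmstar : ∀ p ∈ Ω, cross3 (du rstar p) (dv rstar p) ≠ 0)
    (hE : ∀ p ∈ Ω, Icoef₁ rstar p = Icoef₁ r p)
    (hF : ∀ p ∈ Ω, Icoef₂ rstar p = Icoef₂ r p)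
    (hG : ∀ p ∈ Ω, Icoef₃ rstar p = Icoef₃ r p) :
    ∀ p ∈ Ω, gaussK rstar p = gaussK r p := by
  intro p hp
  rw [gauss_brioschi Ω hΩ rstar hrstar hp (himmstar p hp),
      gauss_brioschi Ω hΩ r hr hp (himm p hp)]
  have key : ∀ (f g : ℝ × ℝ → ℝ), (∀ q ∈ Ω, f q = g q) →
      ∀ q ∈ Ω, du f q = du g q ∧ dv f q = dv g q := fun f g h q hq =>
    ⟨du_congr_fun (Filter.eventuallyEq_of_mem (hΩ.mem_nhds hq) (fun x hx => h x hx)),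
     dv_congr_fun (Filter.eventuallyEq_of_mem (hΩ.mem_nhds hq) (fun x hx => h x hx))⟩
  unfold brioschi
  rw [hE p hp, hF p hp, hG p hp,
    (key _ _ hE p hp).1, (key _ _ hE p hp).2,
    (key _ _ hF p hp).1, (key _ _ hF p hp).2,
    (key _ _ hG p hp).1, (key _ _ hG p hp).2,
    (key _ _ (fun q hq => (key _ _ hF q hq).1) p hp).2,
    (key _ _ (fun q hq => (key _ _ hE q hq).2) p hp).2,
    (key _ _ (fun q hq => (key _ _ hG q hq).1) p hp).1]
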